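/- Let q be a prime power, ω a primitive element of F_{q^n} with minimal polynomial f = X^n - Σ_{i=0}^{n-1} f_i X^i over F_q, and ⟨·,·⟩ the symmetric bilinear form with ⟨ω^i, ω^j⟩ = δ_{ij} for 0 ≤ i,j ≤ n-1. Let (a_i)_{i≥0} satisfy the linear recurrence a_{j+n} = Σ_{i=0}^{n-1} f_i a_{j+i} with (a_0,…,a_{n-1}) ≠ 0, and define the F_q-linear map ρ: F_{q^n} → F_{q^n} by ρ(ω^i) = Σ_{j=0}^{n-1} a_{j+i} ω^j for 0 ≤ i ≤ n-1. Then ρ is bijective and satisfies ⟨ρ(ωy), z⟩ = ⟨ρ(y), ωz⟩ for all y, z ∈ F_{q^n}; equivalently ρ∘m_ω = m_ω†∘ρ, where m_ω is multiplication by ω. -/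

import Mathlib

/-- Let `ω` be a primitive element of `K = F_{q^n}` with minimal polynomial
`f = X^n - Σ f_i X^i`, and `B` the bilinear form with `B(ω^i, ω^j) = δ_{ij}` for
`i,j < n`. If `(a_i)` satisfies `a_{j+n} = Σ_{i<n} f_i a_{j+i}` with nonzero initial
data, and `ρ` is the `F_q`-linear map with `ρ(ω^i) = Σ_{j<n} a_{j+i} ω^j` for `i < n`,
then `ρ` is bijective and `⟨ρ(ωy), z⟩ = ⟨ρ(y), ωz⟩` for all `y, z`. -/
theorem stmt19 (F K : Type*) [Field F] [Field K] [Algebra F K] [Fintype F] [Fintype K]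
    (n : ℕ) (hn : 0 < n) (ω : K)
    (hprim : ∀ x : K, x ≠ 0 → ∃ m : ℕ, x = ω ^ m)
    (b : Module.Basis (Fin n) F K) (hb : ∀ i : Fin n, b i = ω ^ (i : ℕ))
    (f : Fin n → F) (hf : ω ^ n = ∑ i : Fin n, f i • ω ^ (i : ℕ))
    (a : ℕ → F) (hrec : ∀ j : ℕ, a (j + n) = ∑ i : Fin n, f i * a (j + (i : ℕ)))
    (hne : ∃ i : Fin n, a (i : ℕ) ≠ 0)
    (B : K →ₗ[F] K →ₗ[F] F)
    (hB : ∀ i j : Fin n, B (ω ^ (i : ℕ)) (ω ^ (j : ℕ)) = if i = j then 1 else 0)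
    (ρ : K →ₗ[F] K)
    (hρ : ∀ i : Fin n, ρ (ω ^ (i : ℕ)) = ∑ j : Fin n, a ((j : ℕ) + (i : ℕ)) • ω ^ (j : ℕ)) :
    Function.Bijective ρ ∧ ∀ y z : K, B (ρ (ω * y)) z = B (ρ y) (ω * z) := by
  classical
  -- power of ω beyond n expressed via the recurrence
  have hpow : ∀ k : ℕ, ω ^ (k + n) = ∑ i : Fin n, f i • ω ^ (k + (i : ℕ)) := by
    intro k
    rw [pow_add, hf, Finset.mul_sum]
    refine Finset.sum_congr rfl fun i _ => ?_
    rw [mul_smul_comm, ← pow_add]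
  -- ρ formula for all powers
  have hC : ∀ m : ℕ, ρ (ω ^ m) = ∑ j : Fin n, a ((j : ℕ) + m) • ω ^ (j : ℕ) := by
    intro m
    induction m using Nat.strong_induction_on with
    | _ m ih =>
      rcases lt_or_ge m n with hm | hm
      · exact hρ ⟨m, hm⟩
      · obtain ⟨k, rfl⟩ : ∃ k, m = k + n := ⟨m - n, (Nat.sub_add_cancel hm).symm⟩
        rw [hpow k, map_sum]
        have : ∀ i : Fin n, ρ (f i • ω ^ (k + (i : ℕ)))
            = ∑ j : Fin n, (f i * a ((j : ℕ) + (k + (i : ℕ)))) • ω ^ (j : ℕ) := by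
          intro i
          rw [map_smul, ih (k + (i : ℕ)) (by omega), Finset.smul_sum]
          simp [smul_smul]
        simp_rw [this]
        rw [Finset.sum_comm]
        refine Finset.sum_congr rfl fun j _ => ?_
        rw [← Finset.sum_smul]
        congr 1
        rw [show (j : ℕ) + (k + n) = ((j : ℕ) + k) + n by omega, hrec ((j : ℕ) + k)]
        refine Finset.sum_congr rfl fun i _ => ?_
        rw [show (j : ℕ) + (k + (i : ℕ)) = (j : ℕ) + k + (i : ℕ) by omega]
  -- key bilinear values
  have hD : ∀ m₂ m₁ : ℕ, B (ρ (ω ^ m₁)) (ω ^ m₂) = a (m₂ + m₁) := by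
    intro m₂
    induction m₂ using Nat.strong_induction_on with
    | _ m₂ ih =>
      intro m₁
      rcases lt_or_ge m₂ n with hm | hm
      · rw [hC m₁, map_sum]
        have : ∀ j : Fin n, B (a ((j : ℕ) + m₁) • ω ^ (j : ℕ)) (ω ^ m₂)
            = a ((j : ℕ) + m₁) * (if j = (⟨m₂, hm⟩ : Fin n) then 1 else 0) := by
          intro j
          rw [map_smul]
          have := hB j ⟨m₂, hm⟩
          simp only [LinearMap.smul_apply, smul_eq_mul]
          rw [this]
        simp_rw [LinearMap.sum_apply, this, mul_ite, mul_one, mul_zero]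
        rw [Finset.sum_ite_eq' Finset.univ (⟨m₂, hm⟩ : Fin n)]
        simp [add_comm]
      · obtain ⟨k, rfl⟩ : ∃ k, m₂ = k + n := ⟨m₂ - n, (Nat.sub_add_cancel hm).symm⟩
        rw [hpow k, map_sum]
        simp_rw [map_smul, smul_eq_mul]
        have : ∀ i : Fin n, f i * B (ρ (ω ^ m₁)) (ω ^ (k + (i : ℕ)))
            = f i * a ((k + m₁) + (i : ℕ)) := by
          intro i
          rw [ih (k + (i : ℕ)) (by omega) m₁,
            show k + (i : ℕ) + m₁ = k + m₁ + (i : ℕ) by omega]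
        simp_rw [this]
        rw [← hrec (k + m₁)]
        congr 1
        omega
  -- adjoint identity
  have hadj : ∀ y z : K, B (ρ (ω * y)) z = B (ρ y) (ω * z) := by
    have key : B.comp (ρ.comp (LinearMap.mulLeft F ω))
        = (B.comp ρ).compl₂ (LinearMap.mulLeft F ω) := by
      apply b.ext; intro i
      apply b.ext; intro k
      simp only [LinearMap.comp_apply, LinearMap.compl₂_apply, LinearMap.mulLeft_apply, hb]
      rw [← pow_succ', ← pow_succ', hD, hD]
      congr 1
      omega
    intro y z
    have := LinearMap.congr_fun (LinearMap.congr_fun key y) z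
    simpa using this
  refine ⟨?_, hadj⟩
  -- iterated adjoint
  have hiter : ∀ (m : ℕ) (y z : K), B (ρ (ω ^ m * y)) z = B (ρ y) (ω ^ m * z) := by
    intro m
    induction m with
    | zero => simp
    | succ m ih =>
      intro y z
      rw [show ω ^ (m + 1) * y = ω ^ m * (ω * y) by ring, ih (ω * y) z, hadj,
        show ω * (ω ^ m * z) = ω ^ (m + 1) * z by ring]
  -- injectivity
  have hinj : Function.Injective ρ := by
    rw [← LinearMap.ker_eq_bot, LinearMap.ker_eq_bot']
    intro y hy
    by_contra hy0
    obtain ⟨i, hi⟩ := hne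
    have hbne : ω ^ (i : ℕ) ≠ 0 := by rw [← hb i]; exact b.ne_zero i
    have ht : ω ^ (i : ℕ) * y⁻¹ ≠ 0 := mul_ne_zero hbne (inv_ne_zero hy0)
    obtain ⟨m, hm⟩ := hprim _ ht
    have h1 : ω ^ (i : ℕ) = ω ^ m * y := by
      field_simp at hm
      rw [hm, mul_comm]
    have h2 : B (ρ (ω ^ (i : ℕ))) (ω ^ 0) = 0 := by
      rw [h1, hiter m y (ω ^ 0), hy]
      simp
    rw [hD 0 (i : ℕ), zero_add] at h2
    exact hi h2
  exact Finite.injective_iff_bijective.mp hinj
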